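/- Let w = Σ_{n≥0} c(n) xⁿ ∈ ℚ[[x]] with c(n) = (6n)!/((3n)!(2n)!n!), and let θ = x·d/dx be the Euler derivation on formal power series. Then w satisfies the Picard–Fuchs equation θ²w - 12·x·(6θ+1)(6θ+5)·w = 0. -/

import Mathlib

open PowerSeries in
/-- The series `w = Σ (6n)!/((3n)!(2n)!n!) xⁿ` satisfies the Picard–Fuchs equation
`θ²w - 12·x·(6θ+1)(6θ+5)·w = 0`, where `θ = x·d/dx`. -/
theorem sextic_period_picard_fuchs
    (c : ℕ → ℚ)
    (hc : ∀ n, c n = ((6 * n).factorial : ℚ) /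
      (((3 * n).factorial : ℚ) * ((2 * n).factorial : ℚ) * (n.factorial : ℚ)))
    (w : PowerSeries ℚ) (hw : w = PowerSeries.mk c)
    (θ : PowerSeries ℚ → PowerSeries ℚ)
    (hθ : ∀ f, θ f = PowerSeries.X * PowerSeries.derivativeFun f) :
    θ (θ w) - 12 * PowerSeries.X *
      (6 * θ (6 * θ w + 5 * w) + (6 * θ w + 5 * w)) = 0 := by
  have hθc : ∀ f n, coeff n (θ f) = n * coeff n f := by
    intro f n
    rw [hθ]
    cases n with
    | zero => simp
    | succ m =>
        rw [coeff_succ_X_mul, show f.derivativeFun = derivative ℚ f from rfl, coeff_derivative]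
        push_cast
        ring
  have h6 : (6 : PowerSeries ℚ) = C 6 := (map_ofNat _ _).symm
  have h5 : (5 : PowerSeries ℚ) = C 5 := (map_ofNat _ _).symm
  have h12 : (12 : PowerSeries ℚ) = C 12 := (map_ofNat _ _).symm
  have hG : ∀ n, coeff n (6 * θ (6 * θ w + 5 * w) + (6 * θ w + 5 * w))
      = (6 * n + 1) * (6 * n + 5) * c n := by
    intro n
    rw [map_add, h6, h5, coeff_C_mul, hθc, map_add, coeff_C_mul, coeff_C_mul,
      hθc, hw, coeff_mk]
    ring
  ext n
  rw [map_sub, map_zero, sub_eq_zero]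
  cases n with
  | zero =>
      rw [hθc]
      have : (12 : PowerSeries ℚ) * X * (6 * θ (6 * θ w + 5 * w) + (6 * θ w + 5 * w))
          = X * (12 * (6 * θ (6 * θ w + 5 * w) + (6 * θ w + 5 * w))) := by ring
      rw [this]
      simp
  | succ n =>
      have hre : (12 : PowerSeries ℚ) * X * (6 * θ (6 * θ w + 5 * w) + (6 * θ w + 5 * w))
          = X * (12 * (6 * θ (6 * θ w + 5 * w) + (6 * θ w + 5 * w))) := by ring
      rw [hre, coeff_succ_X_mul, h12, coeff_C_mul, hG, hθc, hθc, hw, coeff_mk]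
      -- goal: (n+1) * ((n+1) * c (n+1)) = 12 * ((6n+1)*(6n+5)*c n)
      have e6 : ((6 * (n+1)).factorial : ℚ)
          = (6*n+6)*(6*n+5)*(6*n+4)*(6*n+3)*(6*n+2)*(6*n+1)*((6*n).factorial) := by
        have h : 6 * (n+1) = 6*n+1+1+1+1+1+1 := by ring
        rw [h]
        simp [Nat.factorial_succ]
        ring
      have e3 : ((3 * (n+1)).factorial : ℚ)
          = (3*n+3)*(3*n+2)*(3*n+1)*((3*n).factorial) := by
        have h : 3 * (n+1) = 3*n+1+1+1 := by ring
        rw [h]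
        simp [Nat.factorial_succ]
        ring
      have e2 : ((2 * (n+1)).factorial : ℚ)
          = (2*n+2)*(2*n+1)*((2*n).factorial) := by
        have h : 2 * (n+1) = 2*n+1+1 := by ring
        rw [h]
        simp [Nat.factorial_succ]
        ring
      have e1 : (((n+1)).factorial : ℚ) = (n+1)*(n.factorial) := by
        simp [Nat.factorial_succ]
      have f6 : ((6*n).factorial : ℚ) ≠ 0 := Nat.cast_ne_zero.2 (Nat.factorial_ne_zero _)
      have f3 : ((3*n).factorial : ℚ) ≠ 0 := Nat.cast_ne_zero.2 (Nat.factorial_ne_zero _)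
      have f2 : ((2*n).factorial : ℚ) ≠ 0 := Nat.cast_ne_zero.2 (Nat.factorial_ne_zero _)
      have f1 : ((n).factorial : ℚ) ≠ 0 := Nat.cast_ne_zero.2 (Nat.factorial_ne_zero _)
      have hn1 : ((n:ℚ)+1) ≠ 0 := by positivity
      rw [hc, hc, e6, e3, e2, e1]
      push_cast
      field_simp
      ring
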